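/- arXiv:2410.01135 — 6 statements merged into one kernel-verified Lean document; each statement's English description precedes it below -/
import Mathlib

section
/- Let e₁, e₂, f₁, f₂ ∈ ℂ³ satisfy e₁ ⬝ e₁ = f₁ ⬝ f₁, e₁ ⬝ e₂ = f₁ ⬝ f₂ and e₂ ⬝ e₂ = f₂ ⬝ f₂, and let c ∈ ℂ with c ≠ 0 and c² = (e₁ × e₂) ⬝ (e₁ × e₂). Set n := c⁻¹ • (e₁ × e₂) and m := c⁻¹ • (f₁ × f₂). Then the matrix M₀ with columns e₁, e₂, n is invertible, and the matrix R := M₁ * M₀⁻¹ (where M₁ has columns f₁, f₂, m) satisfies Rᵀ * R = 1, det R = 1, R.mulVec e₁ = f₁, R.mulVec e₂ = f₂ and R.mulVec n = m. -/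
open Matrix

/-- The symmetric bilinear dot product on ℂ³ (not the Hermitian inner product). -/
def dot3 (x y : Fin 3 → ℂ) : ℂ := x 0 * y 0 + x 1 * y 1 + x 2 * y 2

/-- The standard cross product on ℂ³. -/
def cross3 (x y : Fin 3 → ℂ) : Fin 3 → ℂ := crossProduct x y

/-- The rolling rotation between two pointwise-isometric tangent frames is
complex-orthogonal with determinant 1 and maps frame to frame. -/
theorem rolling_rotation (e₁ e₂ f₁ f₂ : Fin 3 → ℂ) (c : ℂ)
    (h11 : dot3 e₁ e₁ = dot3 f₁ f₁) (h12 : dot3 e₁ e₂ = dot3 f₁ f₂)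
    (h22 : dot3 e₂ e₂ = dot3 f₂ f₂)
    (hc : c ≠ 0) (hc2 : c ^ 2 = dot3 (cross3 e₁ e₂) (cross3 e₁ e₂)) :
    let n : Fin 3 → ℂ := c⁻¹ • cross3 e₁ e₂
    let m : Fin 3 → ℂ := c⁻¹ • cross3 f₁ f₂
    let M₀ : Matrix (Fin 3) (Fin 3) ℂ := (Matrix.of ![e₁, e₂, n])ᵀ
    let M₁ : Matrix (Fin 3) (Fin 3) ℂ := (Matrix.of ![f₁, f₂, m])ᵀ
    let R : Matrix (Fin 3) (Fin 3) ℂ := M₁ * M₀⁻¹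
    IsUnit M₀ ∧ Rᵀ * R = 1 ∧ R.det = 1 ∧
      R.mulVec e₁ = f₁ ∧ R.mulVec e₂ = f₂ ∧ R.mulVec n = m := by
  intro n m M₀ M₁ R
  simp only [dot3, cross3, cross_apply, Matrix.cons_val_zero, Matrix.cons_val_one,
    Matrix.head_cons, Matrix.cons_val_two, Matrix.tail_cons] at h11 h12 h22 hc2
  have hdet0 : M₀.det = c := by
    show ((Matrix.of ![e₁, e₂, n])ᵀ).det = c
    rw [det_transpose, det_fin_three]
    simp only [of_apply, Matrix.cons_val_zero, Matrix.cons_val_one, Matrix.head_cons,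
      Matrix.cons_val_two, Matrix.tail_cons, n, Pi.smul_apply, smul_eq_mul, cross3,
      cross_apply]
    field_simp
    linear_combination -hc2
  have hdet1 : M₁.det = c := by
    show ((Matrix.of ![f₁, f₂, m])ᵀ).det = c
    rw [det_transpose, det_fin_three]
    simp only [of_apply, Matrix.cons_val_zero, Matrix.cons_val_one, Matrix.head_cons,
      Matrix.cons_val_two, Matrix.tail_cons, m, Pi.smul_apply, smul_eq_mul, cross3,
      cross_apply]
    field_simp
    linear_combination -hc2
      - (f₂ 0 * f₂ 0 + f₂ 1 * f₂ 1 + f₂ 2 * f₂ 2) * h11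
      - (e₁ 0 * e₁ 0 + e₁ 1 * e₁ 1 + e₁ 2 * e₁ 2) * h22
      + (e₁ 0 * e₂ 0 + e₁ 1 * e₂ 1 + e₁ 2 * e₂ 2
         + f₁ 0 * f₂ 0 + f₁ 1 * f₂ 1 + f₁ 2 * f₂ 2) * h12
  have hG : M₁ᵀ * M₁ = M₀ᵀ * M₀ := by
    ext i j
    fin_cases i <;> fin_cases j <;>
      simp [Matrix.mul_apply, Fin.sum_univ_three, M₀, M₁, n, m, Matrix.transpose_apply,
        Matrix.vecHead, Matrix.vecTail, Pi.smul_apply, smul_eq_mul, cross3, cross_apply]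
    · linear_combination -h11
    · linear_combination -h12
    · ring
    · linear_combination -h12
    · linear_combination -h22
    · ring
    · ring
    · ring
    · field_simp
      linear_combination
        - (f₂ 0 * f₂ 0 + f₂ 1 * f₂ 1 + f₂ 2 * f₂ 2) * h11
        - (e₁ 0 * e₁ 0 + e₁ 1 * e₁ 1 + e₁ 2 * e₁ 2) * h22
        + (e₁ 0 * e₂ 0 + e₁ 1 * e₂ 1 + e₁ 2 * e₂ 2
           + f₁ 0 * f₂ 0 + f₁ 1 * f₂ 1 + f₁ 2 * f₂ 2) * h12
  have hdu : IsUnit M₀.det := by rw [hdet0]; exact hc.isUnit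
  have hinv : M₀⁻¹ * M₀ = 1 := nonsing_inv_mul _ hdu
  have hinv' : M₀ * M₀⁻¹ = 1 := mul_nonsing_inv _ hdu
  have hRM : R * M₀ = M₁ := by
    show M₁ * M₀⁻¹ * M₀ = M₁
    rw [Matrix.mul_assoc, hinv, Matrix.mul_one]
  have key : ∀ i j, (R * M₀) i j = M₁ i j := fun i j => by rw [hRM]
  refine ⟨(isUnit_iff_isUnit_det M₀).2 hdu, ?_, ?_, ?_, ?_, ?_⟩
  · show (M₁ * M₀⁻¹)ᵀ * (M₁ * M₀⁻¹) = 1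
    rw [transpose_mul]
    calc M₀⁻¹ᵀ * M₁ᵀ * (M₁ * M₀⁻¹)
        = M₀⁻¹ᵀ * (M₁ᵀ * M₁ * M₀⁻¹) := by rw [Matrix.mul_assoc, Matrix.mul_assoc]
      _ = M₀⁻¹ᵀ * (M₀ᵀ * M₀ * M₀⁻¹) := by rw [hG]
      _ = M₀⁻¹ᵀ * (M₀ᵀ * (M₀ * M₀⁻¹)) := by rw [Matrix.mul_assoc]
      _ = M₀⁻¹ᵀ * M₀ᵀ := by rw [hinv', Matrix.mul_one]
      _ = (M₀ * M₀⁻¹)ᵀ := by rw [transpose_mul]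
      _ = 1 := by rw [hinv', transpose_one]
  · show (M₁ * M₀⁻¹).det = 1
    rw [det_mul, hdet1, det_nonsing_inv, hdet0, Ring.inverse_eq_inv]
    exact mul_inv_cancel₀ hc
  · ext i
    have := key i 0
    simp only [Matrix.mul_apply, Fin.sum_univ_three, transpose_apply, of_apply,
      Matrix.cons_val_zero] at this
    simpa [Matrix.mulVec, dotProduct, Fin.sum_univ_three, M₀, M₁] using this
  · ext i
    have := key i 1
    simp only [Matrix.mul_apply, Fin.sum_univ_three, transpose_apply, of_apply,
      Matrix.cons_val_one, Matrix.head_cons] at this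
    simpa [Matrix.mulVec, dotProduct, Fin.sum_univ_three, M₀, M₁] using this
  · ext i
    have := key i 2
    simp only [Matrix.mul_apply, Fin.sum_univ_three, transpose_apply, of_apply,
      Matrix.cons_val_two, Matrix.tail_cons, Matrix.head_cons] at this
    simpa [Matrix.mulVec, dotProduct, Fin.sum_univ_three, M₀, M₁] using this
end

section
/- Let D ⊆ ℝ² be open and let x₀, t : D → ℂ³ and R : D → Matrix (Fin 3) (Fin 3) ℂ be twice continuously differentiable. Define x : D → ℂ³ by x p := (R p).mulVec (x₀ p) + t p and assume that for all p ∈ D and all v ∈ ℝ²: fderiv ℝ x p v = (R p).mulVec (fderiv ℝ x₀ p v). Then for all p ∈ D and all v, w ∈ ℝ²: (fderiv ℝ R p v).mulVec (fderiv ℝ x₀ p w) = (fderiv ℝ R p w).mulVec (fderiv ℝ x₀ p v). (This is the compatibility condition R⁻¹dR ∧ dx₀ = 0 obtained by applying d to the rolling equation (x,dx) = (R,t)(x₀,dx₀).) -/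
open Matrix

noncomputable instance : NormedAddCommGroup (Matrix (Fin 3) (Fin 3) ℂ) :=
  Matrix.normedAddCommGroup

noncomputable instance : NormedSpace ℝ (Matrix (Fin 3) (Fin 3) ℂ) :=
  Matrix.normedSpace

/-- `mulVec` as a continuous ℝ-bilinear map. -/
noncomputable def mulVecL : Matrix (Fin 3) (Fin 3) ℂ →L[ℝ] (Fin 3 → ℂ) →L[ℝ] (Fin 3 → ℂ) :=
  LinearMap.toContinuousLinearMap
    { toFun := fun M => LinearMap.toContinuousLinearMap ((Matrix.mulVecLin M).restrictScalars ℝ)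
      map_add' := by
        intro M N; ext v i
        simp [Matrix.add_mulVec]
      map_smul' := by
        intro r M; ext v i
        simp [Matrix.smul_mulVec] }

@[simp] lemma mulVecL_apply (M : Matrix (Fin 3) (Fin 3) ℂ) (v : Fin 3 → ℂ) :
    mulVecL M v = M.mulVec v := rfl

/-- The compatibility condition R⁻¹dR ∧ dx₀ = 0 obtained by differentiating the
rolling equation (x, dx) = (R, t)(x₀, dx₀). -/
theorem rolling_compatibility (D : Set (ℝ × ℝ)) (hD : IsOpen D)
    (x₀ t : ℝ × ℝ → Fin 3 → ℂ) (R : ℝ × ℝ → Matrix (Fin 3) (Fin 3) ℂ)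
    (hx₀ : ContDiffOn ℝ 2 x₀ D) (ht : ContDiffOn ℝ 2 t D) (hR : ContDiffOn ℝ 2 R D)
    (x : ℝ × ℝ → Fin 3 → ℂ)
    (hx : ∀ p, x p = (R p).mulVec (x₀ p) + t p)
    (hdx : ∀ p ∈ D, ∀ v : ℝ × ℝ, fderiv ℝ x p v = (R p).mulVec (fderiv ℝ x₀ p v)) :
    ∀ p ∈ D, ∀ v w : ℝ × ℝ,
      (fderiv ℝ R p v).mulVec (fderiv ℝ x₀ p w) =
        (fderiv ℝ R p w).mulVec (fderiv ℝ x₀ p v) := by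
  intro p hp v w
  have hpD : D ∈ nhds p := hD.mem_nhds hp
  have hx₀p : ContDiffAt ℝ 2 x₀ p := hx₀.contDiffAt hpD
  have hRp : ContDiffAt ℝ 2 R p := hR.contDiffAt hpD
  have htp : ContDiffAt ℝ 2 t p := ht.contDiffAt hpD
  have hxeq : x = fun q => mulVecL (R q) (x₀ q) + t q := by
    funext q; rw [hx q]; simp
  have hxp : ContDiffAt ℝ 2 x p := by
    rw [hxeq]
    exact ((mulVecL.contDiff.contDiffAt.comp p hRp).clm_apply hx₀p).add htp
  -- differentiability of the first derivatives
  have hdfx : DifferentiableAt ℝ (fderiv ℝ x) p :=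
    (hxp.fderiv_right (m := 1) (by norm_num)).differentiableAt one_ne_zero
  have hdfx₀ : DifferentiableAt ℝ (fderiv ℝ x₀) p :=
    (hx₀p.fderiv_right (m := 1) (by norm_num)).differentiableAt one_ne_zero
  have hdR : DifferentiableAt ℝ R p := hRp.differentiableAt (by norm_num)
  -- applying the derivative at a fixed vector
  have appA : ∀ (f : ℝ × ℝ → Fin 3 → ℂ), DifferentiableAt ℝ (fderiv ℝ f) p →
      ∀ a u : ℝ × ℝ, fderiv ℝ (fun q => fderiv ℝ f q a) p u = fderiv ℝ (fderiv ℝ f) p u a := by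
    intro f hf a u
    have := fderiv_clm_apply (c := fderiv ℝ f) (u := fun _ => a) hf
      (differentiableAt_const a)
    rw [this]
    simp
  -- the key computation
  have key : ∀ a u : ℝ × ℝ, fderiv ℝ (fderiv ℝ x) p u a =
      (R p).mulVec (fderiv ℝ (fderiv ℝ x₀) p u a) +
        (fderiv ℝ R p u).mulVec (fderiv ℝ x₀ p a) := by
    intro a u
    have heq : (fun q => fderiv ℝ x q a) =ᶠ[nhds p]
        (fun q => mulVecL (R q) (fderiv ℝ x₀ q a)) := by
      filter_upwards [hpD] with q hq
      simp [hdx q hq a]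
    have hy : DifferentiableAt ℝ (fun q => fderiv ℝ x₀ q a) p := by
      have := fderiv_clm_apply (c := fderiv ℝ x₀) (u := fun _ => a) hdfx₀
        (differentiableAt_const a)
      exact (hdfx₀.clm_apply (differentiableAt_const a))
    have hc : DifferentiableAt ℝ (fun q => mulVecL (R q)) p :=
      mulVecL.differentiableAt.comp p hdR
    have hcd : fderiv ℝ (fun q => mulVecL (R q)) p = mulVecL.comp (fderiv ℝ R p) :=
      (mulVecL.hasFDerivAt.comp p hdR.hasFDerivAt).fderiv
    calc fderiv ℝ (fderiv ℝ x) p u a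
        = fderiv ℝ (fun q => fderiv ℝ x q a) p u := (appA x hdfx a u).symm
      _ = fderiv ℝ (fun q => mulVecL (R q) (fderiv ℝ x₀ q a)) p u := by
          rw [heq.fderiv_eq]
      _ = (R p).mulVec (fderiv ℝ (fderiv ℝ x₀) p u a) +
            (fderiv ℝ R p u).mulVec (fderiv ℝ x₀ p a) := by
          rw [fderiv_clm_apply hc hy]
          simp [hcd, appA x₀ hdfx₀ a u]
  have hsx : IsSymmSndFDerivAt ℝ x p := hxp.isSymmSndFDerivAt (by simp)
  have hsx₀ : IsSymmSndFDerivAt ℝ x₀ p := hx₀p.isSymmSndFDerivAt (by simp)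
  have h1 := key w v
  have h2 := key v w
  rw [← hsx v w, ← hsx₀ v w, h1] at h2
  exact add_left_cancel h2
end

section
/- Let S be a skew-symmetric 3×3 complex matrix (Sᵀ = −S), let e₁, e₂ ∈ ℂ³ and c ∈ ℂ with c ≠ 0 and c² = (e₁ × e₂) ⬝ (e₁ × e₂), and set N₀ := c⁻¹ • (e₁ × e₂). If e₁ ⬝ (S.mulVec e₂) = 0, then S = α (N₀ × S.mulVec N₀); equivalently, S.mulVec a = (N₀ × S.mulVec N₀) × a for every a ∈ ℂ³. -/
open Matrix

/-- The hat map α : ℂ³ → o₃(ℂ). -/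
def hat (x : Fin 3 → ℂ) : Matrix (Fin 3) (Fin 3) ℂ :=
  !![0, -x 2, x 1; x 2, 0, -x 0; -x 1, x 0, 0]

lemma cross3_apply (x y : Fin 3 → ℂ) :
    cross3 x y = ![x 1 * y 2 - x 2 * y 1, x 2 * y 0 - x 0 * y 2, x 0 * y 1 - x 1 * y 0] := by
  simp [cross3, crossProduct]

lemma triple (u v : Fin 3 → ℂ) :
    cross3 u (cross3 v u) = fun i => dot3 u u * v i - dot3 u v * u i := by
  funext i
  fin_cases i <;> simp [cross3_apply, dot3] <;> ring

/-- A skew-symmetric matrix S with e₁ ⬝ (S e₂) = 0 equals α(N₀ × S N₀), where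
N₀ is the unit normal of the frame e₁, e₂. -/
theorem skew_eq_hat_of_tangential (S : Matrix (Fin 3) (Fin 3) ℂ) (hS : Sᵀ = -S)
    (e₁ e₂ : Fin 3 → ℂ) (c : ℂ) (hc : c ≠ 0)
    (hc2 : c ^ 2 = dot3 (cross3 e₁ e₂) (cross3 e₁ e₂))
    (N₀ : Fin 3 → ℂ) (hN₀ : N₀ = c⁻¹ • cross3 e₁ e₂)
    (h : dot3 e₁ (S.mulVec e₂) = 0) :
    S = hat (cross3 N₀ (S.mulVec N₀)) ∧
      ∀ a : Fin 3 → ℂ, S.mulVec a = cross3 (cross3 N₀ (S.mulVec N₀)) a := by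
  set w : Fin 3 → ℂ := ![S 2 1, S 0 2, S 1 0] with hw
  have hsk : ∀ i j, S j i = -S i j := fun i j => by
    have := congrFun (congrFun hS i) j; simpa using this
  have h00 : S 0 0 = 0 := by linear_combination (hsk 0 0) / 2
  have h11 : S 1 1 = 0 := by linear_combination (hsk 1 1) / 2
  have h22 : S 2 2 = 0 := by linear_combination (hsk 2 2) / 2
  have h01 : S 0 1 = -S 1 0 := hsk 1 0
  have h02 : S 0 2 = -S 2 0 := hsk 2 0
  have h12 : S 1 2 = -S 2 1 := hsk 2 1
  have hmul : ∀ v : Fin 3 → ℂ, S.mulVec v = cross3 w v := by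
    intro v
    funext i
    fin_cases i <;>
      simp [Matrix.mulVec, dotProduct, Fin.sum_univ_three, cross3_apply, hw, h00, h11, h22,
        h01, h02, h12] <;> ring
  have hwN : dot3 w N₀ = 0 := by
    have hwc : dot3 w (cross3 e₁ e₂) = 0 := by
      rw [hmul] at h
      simp only [dot3, cross3_apply, hw] at h ⊢
      simp at h ⊢
      linear_combination -h
    simp only [hN₀, dot3, Pi.smul_apply, smul_eq_mul]
    simp only [dot3] at hwc
    linear_combination c⁻¹ * hwc
  have hNN : dot3 N₀ N₀ = 1 := by
    simp only [hN₀, dot3, Pi.smul_apply, smul_eq_mul]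
    have : c⁻¹ * c = 1 := inv_mul_cancel₀ hc
    simp only [dot3] at hc2
    field_simp
    linear_combination -hc2
  have key : cross3 N₀ (S.mulVec N₀) = w := by
    rw [hmul, triple]
    funext i
    have hNw : dot3 N₀ w = dot3 w N₀ := by simp only [dot3]; ring
    rw [hNw, hwN, hNN]
    ring
  rw [key]
  constructor
  · funext i j
    fin_cases i <;> fin_cases j <;>
      simp [hat, hw, h00, h11, h22, h01, h02, h12]
  · exact hmul
end

section
/- Let e₁, e₂ ∈ ℂ³ and c ∈ ℂ with c ≠ 0 and c² = (e₁ × e₂) ⬝ (e₁ × e₂), and set N₀ := c⁻¹ • (e₁ × e₂). Then for all ω_u, ω_v ∈ ℂ³ with N₀ ⬝ ω_u = 0 and N₀ ⬝ ω_v = 0: ω_u × e₂ = ω_v × e₁ if and only if N₀ ⬝ (ω_u × e₂) = N₀ ⬝ (ω_v × e₁). (This is the paper's remark that the condition ω ×∧ dx₀ = 0 is equivalent to the symmetry s₁₂ = s₂₁ of the difference of second fundamental forms.) -/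
open Matrix

/-- For tangential ω_u, ω_v, the condition ω ×∧ dx₀ = 0 is equivalent to the
symmetry s₁₂ = s₂₁ of the difference of second fundamental forms. -/
theorem cross_wedge_symm_iff (e₁ e₂ : Fin 3 → ℂ) (c : ℂ) (hc : c ≠ 0)
    (hc2 : c ^ 2 = dot3 (cross3 e₁ e₂) (cross3 e₁ e₂))
    (N₀ : Fin 3 → ℂ) (hN₀ : N₀ = c⁻¹ • cross3 e₁ e₂) :
    ∀ ωu ωv : Fin 3 → ℂ, dot3 N₀ ωu = 0 → dot3 N₀ ωv = 0 →
      (cross3 ωu e₂ = cross3 ωv e₁ ↔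
        dot3 N₀ (cross3 ωu e₂) = dot3 N₀ (cross3 ωv e₁)) := by
  subst hN₀
  intro ωu ωv hu hv
  constructor
  · intro h; rw [h]
  · intro h
    simp only [dot3, cross3, cross_apply, Pi.smul_apply, smul_eq_mul,
      Matrix.cons_val_zero, Matrix.cons_val_one, Matrix.head_cons,
      Matrix.cons_val_two, Matrix.tail_cons] at hu hv h hc2
    field_simp at hu hv h
    set a0 := e₁ 0; set a1 := e₁ 1; set a2 := e₁ 2
    set b0 := e₂ 0; set b1 := e₂ 1; set b2 := e₂ 2
    set u0 := ωu 0; set u1 := ωu 1; set u2 := ωu 2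
    set v0 := ωv 0; set v1 := ωv 1; set v2 := ωv 2
    have htwo : (⟨2, by norm_num⟩ : Fin 3) = 2 := rfl
    funext i
    fin_cases i <;>
      simp only [cross3, cross_apply, Fin.zero_eta, Fin.mk_one, Fin.isValue, htwo,
        Matrix.cons_val_zero, Matrix.cons_val_one, Matrix.head_cons,
        Matrix.cons_val_two, Matrix.tail_cons] <;>
      [(apply mul_left_cancel₀ (pow_ne_zero 2 hc);
        linear_combination (a1*b2 - a2*b1) * h
          + ((a2*b0 - a0*b2)*b2 - (a0*b1 - a1*b0)*b1) * hu
          - ((a2*b0 - a0*b2)*a2 - (a0*b1 - a1*b0)*a1) * hv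
          + ((u1*b2 - u2*b1) - (v1*a2 - v2*a1)) * hc2);
       (apply mul_left_cancel₀ (pow_ne_zero 2 hc);
        linear_combination (a2*b0 - a0*b2) * h
          + ((a0*b1 - a1*b0)*b0 - (a1*b2 - a2*b1)*b2) * hu
          - ((a0*b1 - a1*b0)*a0 - (a1*b2 - a2*b1)*a2) * hv
          + ((u2*b0 - u0*b2) - (v2*a0 - v0*a2)) * hc2);
       (apply mul_left_cancel₀ (pow_ne_zero 2 hc);
        linear_combination (a0*b1 - a1*b0) * h
          + ((a1*b2 - a2*b1)*b1 - (a2*b0 - a0*b2)*b0) * hu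
          - ((a1*b2 - a2*b1)*a1 - (a2*b0 - a0*b2)*a0) * hv
          + ((u0*b1 - u1*b0) - (v0*a1 - v1*a0)) * hc2)]
end

section
/- Let D ⊆ ℝ² be open, let N₀ : D → ℂ³ be differentiable with (N₀ p) ⬝ (N₀ p) = 1 for all p, let R : D → Matrix (Fin 3) (Fin 3) ℂ be twice continuously differentiable with (R p)ᵀ * R p = 1 and det (R p) = 1 for all p, and let ω_u, ω_v : D → ℂ³ be differentiable with N₀ p ⬝ ω_u p = 0, N₀ p ⬝ ω_v p = 0, (R p)ᵀ * fderiv ℝ R p (1,0) = α (ω_u p) and (R p)ᵀ * fderiv ℝ R p (0,1) = α (ω_v p) for all p ∈ D. Then for all p ∈ D: ω_u p × ω_v p = ((fderiv ℝ N₀ p (1,0)) ⬝ (ω_v p) − (fderiv ℝ N₀ p (0,1)) ⬝ (ω_u p)) • N₀ p. (This is the paper's identity ½ ω ×∧ ω = dN₀ᵀ ∧ ω N₀, equation (2.7).) -/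
open Matrix

abbrev M3 := Matrix (Fin 3) (Fin 3) ℂ
abbrev V3 := Fin 3 → ℂ

lemma hat_inj {a b : Fin 3 → ℂ} (h : hat a = hat b) : a = b := by
  funext i
  fin_cases i
  · have := congrFun (congrFun h 2) 1; simpa [hat] using this
  · have := congrFun (congrFun h 0) 2; simpa [hat] using this
  · have := congrFun (congrFun h 1) 0; simpa [hat] using this

lemma hat_transpose (x : Fin 3 → ℂ) : (hat x)ᵀ = - hat x := by
  ext i j; fin_cases i <;> fin_cases j <;> simp [hat]

lemma hat_bracket (x y : Fin 3 → ℂ) :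
    hat x * hat y - hat y * hat x = hat (cross3 x y) := by
  simp only [hat, cross3, crossProduct, Matrix.mul_fin_three, LinearMap.mk₂_apply]
  ext i j
  fin_cases i <;> fin_cases j <;> simp [Matrix.sub_apply] <;> ring

lemma cross_decomp {n a b : Fin 3 → ℂ} (h1 : dot3 n n = 1)
    (h2 : dot3 n a = 0) (h3 : dot3 n b = 0) :
    cross3 a b = (dot3 n (cross3 a b)) • n := by
  simp only [dot3] at h1 h2 h3
  funext i
  simp only [cross3, crossProduct, dot3, LinearMap.mk₂_apply, Pi.smul_apply, smul_eq_mul]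
  fin_cases i <;> simp <;>
  [ linear_combination (-(a 1 * b 2 - a 2 * b 1))*h1 + (n 1 * b 2 - n 2 * b 1)*h2 - (n 1 * a 2 - n 2 * a 1)*h3;
    linear_combination (-(a 2 * b 0 - a 0 * b 2))*h1 + (n 2 * b 0 - n 0 * b 2)*h2 - (n 2 * a 0 - n 0 * a 2)*h3;
    linear_combination (-(a 0 * b 1 - a 1 * b 0))*h1 + (n 0 * b 1 - n 1 * b 0)*h2 - (n 0 * a 1 - n 1 * a 0)*h3]

def hatLM : V3 →ₗ[ℝ] M3 where
  toFun := hat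
  map_add' x y := by
    ext i j; fin_cases i <;> fin_cases j <;> simp [hat] <;> ring
  map_smul' r x := by
    ext i j; fin_cases i <;> fin_cases j <;>
      simp [hat, Matrix.smul_apply, Complex.real_smul] <;> ring

noncomputable def hatCLM : V3 →L[ℝ] M3 := LinearMap.toContinuousLinearMap hatLM

lemma hatCLM_apply (x : V3) : hatCLM x = hat x := rfl

noncomputable def tCLM : M3 →L[ℝ] M3 :=
  LinearMap.toContinuousLinearMap
    { toFun := fun A => Aᵀ
      map_add' := fun A B => Matrix.transpose_add A B
      map_smul' := fun r A => Matrix.transpose_smul r A }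

lemma tCLM_apply (A : M3) : tCLM A = Aᵀ := rfl

noncomputable def mulCLM : M3 →L[ℝ] M3 →L[ℝ] M3 :=
  LinearMap.toContinuousLinearMap
    { toFun := fun A => LinearMap.toContinuousLinearMap
        ((LinearMap.mul ℝ M3).restrictScalars ℝ A)
      map_add' := fun A B => by ext C; simp [add_mul]
      map_smul' := fun r A => by ext C; simp [smul_mul_assoc] }

lemma mulCLM_apply (A B : M3) : mulCLM A B = A * B := rfl

def dotLM : V3 →ₗ[ℝ] V3 →ₗ[ℝ] ℂ where
  toFun x :=
    { toFun := fun y => dot3 x y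
      map_add' := fun y z => by simp [dot3]; ring
      map_smul' := fun r y => by simp [dot3, Complex.real_smul]; ring }
  map_add' x y := by ext z; simp [dot3]; ring
  map_smul' r x := by ext z; simp [dot3, Complex.real_smul]; ring

noncomputable def dotCLM : V3 →L[ℝ] V3 →L[ℝ] ℂ :=
  LinearMap.toContinuousLinearMap
    { toFun := fun x => LinearMap.toContinuousLinearMap (dotLM x)
      map_add' := fun x y => by ext z; simp
      map_smul' := fun r x => by ext z; simp }

lemma dotCLM_apply (x y : V3) : dotCLM x y = dot3 x y := rfl

/-- The paper's identity ½ ω ×∧ ω = dN₀ᵀ ∧ ω N₀, equation (2.7). -/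
theorem omega_cross_omega (D : Set (ℝ × ℝ)) (hD : IsOpen D)
    (N₀ : ℝ × ℝ → Fin 3 → ℂ) (hN₀ : DifferentiableOn ℝ N₀ D)
    (hunit : ∀ p, dot3 (N₀ p) (N₀ p) = 1)
    (R : ℝ × ℝ → Matrix (Fin 3) (Fin 3) ℂ) (hR : ContDiffOn ℝ 2 R D)
    (horth : ∀ p ∈ D, (R p)ᵀ * R p = 1) (hdet : ∀ p ∈ D, (R p).det = 1)
    (ωu ωv : ℝ × ℝ → Fin 3 → ℂ)
    (hωu : DifferentiableOn ℝ ωu D) (hωv : DifferentiableOn ℝ ωv D)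
    (htu : ∀ p ∈ D, dot3 (N₀ p) (ωu p) = 0)
    (htv : ∀ p ∈ D, dot3 (N₀ p) (ωv p) = 0)
    (hαu : ∀ p ∈ D, (R p)ᵀ * fderiv ℝ R p (1, 0) = hat (ωu p))
    (hαv : ∀ p ∈ D, (R p)ᵀ * fderiv ℝ R p (0, 1) = hat (ωv p)) :
    ∀ p ∈ D,
      cross3 (ωu p) (ωv p) =
        (dot3 (fderiv ℝ N₀ p (1, 0)) (ωv p) -
          dot3 (fderiv ℝ N₀ p (0, 1)) (ωu p)) • N₀ p := by
  intro p hp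
  have hpD : D ∈ nhds p := hD.mem_nhds hp
  have hNd : DifferentiableAt ℝ N₀ p := hN₀.differentiableAt hpD
  have hud : DifferentiableAt ℝ ωu p := hωu.differentiableAt hpD
  have hvd : DifferentiableAt ℝ ωv p := hωv.differentiableAt hpD
  have hRdOn : ∀ q ∈ D, DifferentiableAt ℝ R q := fun q hq =>
    (hR.differentiableOn (by norm_num)).differentiableAt (hD.mem_nhds hq)
  have hRd := hRdOn p hp
  have hR2 : ContDiffAt ℝ 2 R p := hR.contDiffAt hpD
  have hR'd : DifferentiableAt ℝ (fderiv ℝ R) p :=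
    (hR2.fderiv_right (by norm_num : (1:WithTop ℕ∞) + 1 ≤ 2)).differentiableAt one_ne_zero
  set f'' := fderiv ℝ (fderiv ℝ R) p with hf''def
  have hsymm : ∀ v w, f'' v w = f'' w v :=
    second_derivative_symmetric_of_eventually
      (Filter.eventually_of_mem hpD fun q hq => (hRdOn q hq).hasFDerivAt)
      hR'd.hasFDerivAt
  have hT : HasFDerivAt (fun q => (R q)ᵀ) (tCLM.comp (fderiv ℝ R p)) p :=
    tCLM.hasFDerivAt.comp p hRd.hasFDerivAt
  have hEv : ∀ w₀ : ℝ × ℝ, HasFDerivAt (fun q => fderiv ℝ R q w₀)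
      ((ContinuousLinearMap.apply ℝ M3 w₀).comp f'') p :=
    fun w₀ => (ContinuousLinearMap.apply ℝ M3 w₀).hasFDerivAt.comp p hR'd.hasFDerivAt
  have hprod : ∀ (g : (ℝ×ℝ) → M3) (g' : (ℝ×ℝ) →L[ℝ] M3), HasFDerivAt g g' p →
      HasFDerivAt (fun q => (R q)ᵀ * g q)
        ((mulCLM ((R p)ᵀ)).comp g'
          + (show (ℝ×ℝ) →L[ℝ] M3 from (mulCLM.comp (tCLM.comp (fderiv ℝ R p))).flip (g p))) p := by
    intro g g' hg
    exact mulCLM.hasFDerivAt_of_bilinear hT hg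
  -- u-equation, differentiated in direction (0,1)
  have hFu := hprod _ _ (hEv (1,0))
  have hHu : HasFDerivAt (fun q => hat (ωu q)) (hatCLM.comp (fderiv ℝ ωu p)) p :=
    hatCLM.hasFDerivAt.comp p hud.hasFDerivAt
  have hequ : (fun q => hat (ωu q)) =ᶠ[nhds p] (fun q => (R q)ᵀ * fderiv ℝ R q (1,0)) :=
    Filter.eventuallyEq_of_mem hpD fun q hq => (hαu q hq).symm
  have e1 : hat (fderiv ℝ ωu p (0,1)) =
      (R p)ᵀ * f'' (0,1) (1,0) + (fderiv ℝ R p (0,1))ᵀ * fderiv ℝ R p (1,0) := by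
    have heq := hHu.unique (hFu.congr_of_eventuallyEq hequ)
    have := congrArg (fun Φ : (ℝ×ℝ) →L[ℝ] M3 => Φ ((0:ℝ),(1:ℝ))) heq
    exact this
  -- v-equation, differentiated in direction (1,0)
  have hFv := hprod _ _ (hEv (0,1))
  have hHv : HasFDerivAt (fun q => hat (ωv q)) (hatCLM.comp (fderiv ℝ ωv p)) p :=
    hatCLM.hasFDerivAt.comp p hvd.hasFDerivAt
  have heqv : (fun q => hat (ωv q)) =ᶠ[nhds p] (fun q => (R q)ᵀ * fderiv ℝ R q (0,1)) :=
    Filter.eventuallyEq_of_mem hpD fun q hq => (hαv q hq).symm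
  have e2 : hat (fderiv ℝ ωv p (1,0)) =
      (R p)ᵀ * f'' (1,0) (0,1) + (fderiv ℝ R p (1,0))ᵀ * fderiv ℝ R p (0,1) := by
    have heq := hHv.unique (hFv.congr_of_eventuallyEq heqv)
    have := congrArg (fun Φ : (ℝ×ℝ) →L[ℝ] M3 => Φ ((1:ℝ),(0:ℝ))) heq
    exact this
  -- express first derivatives of R
  have hRRt : R p * (R p)ᵀ = 1 := mul_eq_one_comm.mp (horth p hp)
  have hRw : ∀ (w : ℝ×ℝ) (x : V3), (R p)ᵀ * fderiv ℝ R p w = hat x →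
      fderiv ℝ R p w = R p * hat x := by
    intro w x h
    calc fderiv ℝ R p w = (R p * (R p)ᵀ) * fderiv ℝ R p w := by rw [hRRt, one_mul]
    _ = R p * hat x := by rw [Matrix.mul_assoc, h]
  have hRu := hRw _ _ (hαu p hp)
  have hRv := hRw _ _ (hαv p hp)
  have hxy : ∀ x y : V3, (R p * hat x)ᵀ * (R p * hat y) = -(hat x * hat y) := by
    intro x y
    calc (R p * hat x)ᵀ * (R p * hat y)
        = (hat x)ᵀ * ((R p)ᵀ * (R p * hat y)) := by
          rw [Matrix.transpose_mul, Matrix.mul_assoc]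
    _ = (hat x)ᵀ * hat y := by rw [← Matrix.mul_assoc ((R p)ᵀ), horth p hp, Matrix.one_mul]
    _ = -(hat x * hat y) := by rw [hat_transpose, Matrix.neg_mul]
  have key : hat (fderiv ℝ ωu p (0,1) - fderiv ℝ ωv p (1,0)) = hat (cross3 (ωu p) (ωv p)) := by
    rw [show hat (fderiv ℝ ωu p (0,1) - fderiv ℝ ωv p (1,0))
          = hat (fderiv ℝ ωu p (0,1)) - hat (fderiv ℝ ωv p (1,0)) from map_sub hatLM _ _]
    rw [e1, e2, hsymm (0,1) (1,0), hRu, hRv, hxy, hxy, ← hat_bracket]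
    abel
  have hflat : fderiv ℝ ωu p (0,1) - fderiv ℝ ωv p (1,0) = cross3 (ωu p) (ωv p) := hat_inj key
  -- tangency derivatives
  have htang : ∀ (g : (ℝ×ℝ) → V3), DifferentiableAt ℝ g p → (∀ q ∈ D, dot3 (N₀ q) (g q) = 0) →
      ∀ w, dot3 (N₀ p) (fderiv ℝ g p w) + dot3 (fderiv ℝ N₀ p w) (g p) = 0 := by
    intro g hg hzero w
    have hc : HasFDerivAt (fun q => dotCLM (N₀ q)) (dotCLM.comp (fderiv ℝ N₀ p)) p :=
      dotCLM.hasFDerivAt.comp p hNd.hasFDerivAt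
    have hD1 : HasFDerivAt (fun q => dotCLM (N₀ q) (g q))
        ((dotCLM (N₀ p)).comp (fderiv ℝ g p) + (dotCLM.comp (fderiv ℝ N₀ p)).flip (g p)) p :=
      hc.clm_apply hg.hasFDerivAt
    have hzero' : HasFDerivAt (fun q => dotCLM (N₀ q) (g q)) (0 : (ℝ×ℝ) →L[ℝ] ℂ) p := by
      have : (fun q => dotCLM (N₀ q) (g q)) =ᶠ[nhds p] (fun _ => (0:ℂ)) :=
        Filter.eventuallyEq_of_mem hpD fun q hq => hzero q hq
      exact (hasFDerivAt_const (𝕜 := ℝ) (0:ℂ) p).congr_of_eventuallyEq this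
    have heq := hD1.unique hzero'
    have := congrArg (fun Φ : (ℝ×ℝ) →L[ℝ] ℂ => Φ w) heq
    simpa [dotCLM_apply] using this
  have h1 := htang ωu hud htu (0,1)
  have h2 := htang ωv hvd htv (1,0)
  have hC : dot3 (N₀ p) (cross3 (ωu p) (ωv p)) =
      dot3 (fderiv ℝ N₀ p (1,0)) (ωv p) - dot3 (fderiv ℝ N₀ p (0,1)) (ωu p) := by
    rw [← hflat]
    simp only [dot3, Pi.sub_apply] at *
    linear_combination h1 - h2
  calc cross3 (ωu p) (ωv p)
      = (dot3 (N₀ p) (cross3 (ωu p) (ωv p))) • N₀ p :=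
        cross_decomp (hunit p) (htu p hp) (htv p hp)
  _ = (dot3 (fderiv ℝ N₀ p (1, 0)) (ωv p) - dot3 (fderiv ℝ N₀ p (0, 1)) (ωu p)) • N₀ p := by
        rw [hC]
end

section
/- Let e₁, e₂ ∈ ℂ³ and c ∈ ℂ with c ≠ 0 and c² = (e₁ × e₂) ⬝ (e₁ × e₂), and set N₀ := c⁻¹ • (e₁ × e₂). Then for all a_u, a_v ∈ ℂ³ the following are equivalent: (i) for all ω_u, ω_v ∈ ℂ³ with N₀ ⬝ ω_u = 0, N₀ ⬝ ω_v = 0 and ω_u × e₂ = ω_v × e₁, one has a_u ⬝ ω_v = a_v ⬝ ω_u; (ii) a_u ⬝ e₁ = 0, a_v ⬝ e₂ = 0 and a_u ⬝ e₂ + a_v ⬝ e₁ = 0. (This is the paper's equivalence (2.9) and its converse: for a ℂ³-valued 1-form a = a_u du + a_v dv, a^T ∧ ω = 0 for every connection form ω satisfying (2.4) if and only if a^T ⊙ dx₀ = 0.) -/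
open Matrix

/-- The paper's equivalence (2.9) and its converse: aᵀ ∧ ω = 0 for every
connection form ω satisfying (2.4) if and only if aᵀ ⊙ dx₀ = 0. -/
theorem wedge_vanishes_iff_symm_product_vanishes
    (e₁ e₂ : Fin 3 → ℂ) (c : ℂ) (hc : c ≠ 0)
    (hc2 : c ^ 2 = dot3 (cross3 e₁ e₂) (cross3 e₁ e₂))
    (N₀ : Fin 3 → ℂ) (hN₀ : N₀ = c⁻¹ • cross3 e₁ e₂) :
    ∀ au av : Fin 3 → ℂ,
      ((∀ ωu ωv : Fin 3 → ℂ, dot3 N₀ ωu = 0 → dot3 N₀ ωv = 0 →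
          cross3 ωu e₂ = cross3 ωv e₁ → dot3 au ωv = dot3 av ωu) ↔
        (dot3 au e₁ = 0 ∧ dot3 av e₂ = 0 ∧ dot3 au e₂ + dot3 av e₁ = 0)) := by
  intro au av
  set n := cross3 e₁ e₂ with hn
  have hk : dot3 n n ≠ 0 := by rw [← hc2]; exact pow_ne_zero 2 hc
  have hNdot : ∀ y, dot3 N₀ y = c⁻¹ * dot3 n y := by
    intro y
    simp only [hN₀, dot3, Pi.smul_apply, smul_eq_mul, ← hn]
    ring
  have hne1 : dot3 n e₁ = 0 := by
    simp only [hn, dot3, cross3_apply]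
    simp [Matrix.cons_val_zero, Matrix.cons_val_one]
    ring
  have hne2 : dot3 n e₂ = 0 := by
    simp only [hn, dot3, cross3_apply]
    simp [Matrix.cons_val_zero, Matrix.cons_val_one]
    ring
  constructor
  · intro H
    have hz : ∀ y, dot3 y (0 : Fin 3 → ℂ) = 0 := by intro y; simp [dot3]
    have hNz : dot3 N₀ (0 : Fin 3 → ℂ) = 0 := by simp [dot3]
    have hN1 : dot3 N₀ e₁ = 0 := by rw [hNdot, hne1, mul_zero]
    have hN2 : dot3 N₀ e₂ = 0 := by rw [hNdot, hne2, mul_zero]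
    have hNneg2 : dot3 N₀ (-e₂) = 0 := by
      have : dot3 N₀ (-e₂) = -dot3 N₀ e₂ := by simp [dot3]; ring
      rw [this, hN2, neg_zero]
    have c00 : cross3 (0 : Fin 3 → ℂ) e₂ = cross3 e₁ e₁ := by
      funext i; fin_cases i <;> simp [cross3_apply] <;> ring
    have c01 : cross3 e₂ e₂ = cross3 (0 : Fin 3 → ℂ) e₁ := by
      funext i; fin_cases i <;> simp [cross3_apply] <;> ring
    have c02 : cross3 e₁ e₂ = cross3 (-e₂) e₁ := by
      funext i; fin_cases i <;> simp [cross3_apply] <;> ring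
    refine ⟨?_, ?_, ?_⟩
    · have h := H 0 e₁ hNz hN1 c00
      rw [hz] at h; exact h
    · have h := H e₂ 0 hN2 hNz c01
      rw [hz] at h; exact h.symm
    · have h := H e₁ (-e₂) hN1 hNneg2 c02
      have h' : dot3 au (-e₂) = -dot3 au e₂ := by simp [dot3]; ring
      rw [h'] at h
      linear_combination -h
  · rintro ⟨ha1, ha2, ha3⟩ ωu ωv hu hv hcr
    have hnu : dot3 n ωu = 0 := by
      have := hu; rw [hNdot] at this
      exact (mul_eq_zero.mp this).resolve_left (inv_ne_zero hc)
    have hnv : dot3 n ωv = 0 := by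
      have := hv; rw [hNdot] at this
      exact (mul_eq_zero.mp this).resolve_left (inv_ne_zero hc)
    have hD : dot3 n (cross3 ωu e₂) = dot3 n (cross3 ωv e₁) := by rw [hcr]
    have I1 : dot3 n n * dot3 au ωv =
        dot3 n (cross3 ωv e₂) * dot3 au e₁ - dot3 n (cross3 ωv e₁) * dot3 au e₂
          + dot3 n ωv * dot3 au n := by
      simp only [hn, dot3, cross3_apply]
      simp only [Matrix.cons_val_zero, Matrix.cons_val_one, Matrix.head_cons,
        Matrix.cons_val_two, Matrix.tail_cons]
      ring
    have I2 : dot3 n n * dot3 av ωu =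
        dot3 n (cross3 ωu e₂) * dot3 av e₁ - dot3 n (cross3 ωu e₁) * dot3 av e₂
          + dot3 n ωu * dot3 av n := by
      simp only [hn, dot3, cross3_apply]
      simp only [Matrix.cons_val_zero, Matrix.cons_val_one, Matrix.head_cons,
        Matrix.cons_val_two, Matrix.tail_cons]
      ring
    have key : dot3 n n * dot3 au ωv = dot3 n n * dot3 av ωu := by
      rw [I1, I2, ha1, ha2, hnu, hnv, hD]
      linear_combination (-(dot3 n (cross3 ωv e₁))) * ha3
    exact mul_left_cancel₀ hk key
end
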